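/- For every integer h ≥ 1, every prime p, and every integer k ≥ 1: no k-letter 1QFA over the alphabet {0,1} recognizes L(h,p) with an isolated cut-point. That is, for every k-letter 1QFA A over {0,1} and all λ ∈ (0,1) and ε > 0, A does not recognize L(h,p) with cut-point λ isolated by ε. (In particular, taking k = 1, no MO-1QFA recognizes L(h,p) with an isolated cut-point.) -/

import Mathlib

noncomputable section

/-- The `n`-dimensional complex Hilbert space `ℂⁿ`. -/
abbrev QState (n : ℕ) := EuclideanSpace ℂ (Fin n)

/-- Apply a matrix to a vector of `ℂⁿ`. -/
def mApply {n : ℕ} (M : Matrix (Fin n) (Fin n) ℂ) (v : QState n) : QState n :=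
  Matrix.toEuclideanLin M v

/-- A `k`-letter 1QFA. `none : Option Alph` plays the role of the blank symbol `Λ`. -/
structure MultiQFA (Alph : Type) (k n : ℕ) where
  ψ0 : QState n
  ψ0_unit : ‖ψ0‖ = 1
  U : List (Option Alph) → Matrix (Fin n) (Fin n) ℂ
  U_unitary : ∀ w, U w ∈ Matrix.unitaryGroup (Fin n) ℂ
  P : Matrix (Fin n) (Fin n) ℂ
  P_proj : P.conjTranspose = P ∧ P * P = P

namespace MultiQFA
variable {Alph : Type} {k n : ℕ}

/-- The length-`k` suffix of `Λ^{k-1}` followed by the prefix read so far. -/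
def window (k : ℕ) (pre : List Alph) : List (Option Alph) :=
  let l : List (Option Alph) := List.replicate (k - 1) none ++ pre.map some
  l.drop (l.length - k)

/-- `|ψ_x⟩ = U_{w_m} ⋯ U_{w_1} |ψ₀⟩` where `w_i` is the window after `i` letters. -/
def qState (A : MultiQFA Alph k n) (x : List Alph) : QState n :=
  (List.range x.length).foldl
    (fun v i => mApply (A.U (window k (x.take (i + 1)))) v) A.ψ0

def probAcc (A : MultiQFA Alph k n) (x : List Alph) : ℝ := ‖mApply A.P (A.qState x)‖ ^ 2

def Recognizes (A : MultiQFA Alph k n) (L : Set (List Alph)) (lam ε : ℝ) : Prop :=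
  (∀ x ∈ L, lam + ε ≤ A.probAcc x) ∧ (∀ x ∉ L, A.probAcc x ≤ lam - ε)

end MultiQFA

/-- The blocks `1^a 0^b 1 0^h` with `a ≥ 0`, `b ≥ 1`; `true` = 1, `false` = 0. -/
def blockLang (h : ℕ) : Set (List Bool) :=
  {w | ∃ a b : ℕ, 1 ≤ b ∧
    w = List.replicate a true ++ List.replicate b false ++ [true] ++ List.replicate h false}

/-- Kleene star of a set of strings. -/
def kleeneStar (P : Set (List Bool)) : Set (List Bool) :=
  {x | ∃ l : List (List Bool), (∀ w ∈ l, w ∈ P) ∧ x = l.flatten}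

/-- `L(h,p) = (1*00*10^h)* ∩ {w : |w| ≡ 0 (mod p)}`. -/
def Lhp (h p : ℕ) : Set (List Bool) :=
  {w | w ∈ kleeneStar (blockLang h) ∧ w.length % p = 0}

section Stmt14Aux
variable {n : ℕ}

lemma mApply_mul (M N : Matrix (Fin n) (Fin n) ℂ) (v : QState n) :
    mApply (M * N) v = mApply M (mApply N v) := by
  simp [mApply, Matrix.toEuclideanLin_apply, Matrix.mulVec_mulVec]

lemma mApply_one (v : QState n) : mApply 1 v = v := by
  simp [mApply, Matrix.toEuclideanLin_apply, Matrix.one_mulVec]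

lemma mApply_sub (M : Matrix (Fin n) (Fin n) ℂ) (v w : QState n) :
    mApply M (v - w) = mApply M v - mApply M w :=
  map_sub (Matrix.toEuclideanLin M) v w

lemma norm_mApply_unitary {M : Matrix (Fin n) (Fin n) ℂ}
    (hM : M ∈ Matrix.unitaryGroup (Fin n) ℂ) (v : QState n) :
    ‖mApply M v‖ = ‖v‖ := by
  have h1 : M.conjTranspose * M = 1 := by
    have := Matrix.mem_unitaryGroup_iff'.mp hM
    simpa [Matrix.star_eq_conjTranspose] using this
  have key : (inner ℂ (mApply M v) (mApply M v) : ℂ) = inner ℂ v v := by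
    have hadj : Matrix.toEuclideanLin M.conjTranspose
        = LinearMap.adjoint (Matrix.toEuclideanLin M) :=
      Matrix.toEuclideanLin_conjTranspose_eq_adjoint M
    have h2 : (inner ℂ v (mApply M.conjTranspose (mApply M v)) : ℂ)
        = inner ℂ (mApply M v) (mApply M v) := by
      show (inner ℂ v ((Matrix.toEuclideanLin M.conjTranspose) (mApply M v)) : ℂ) = _
      rw [hadj]
      exact LinearMap.adjoint_inner_right (Matrix.toEuclideanLin M) _ _
    rw [← h2, ← mApply_mul, h1, mApply_one]
  have h3 : (‖mApply M v‖ : ℂ) ^ 2 = (‖v‖ : ℂ) ^ 2 := by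
    rwa [inner_self_eq_norm_sq_to_K, inner_self_eq_norm_sq_to_K] at key
  have h4 : ‖mApply M v‖ ^ 2 = ‖v‖ ^ 2 := by exact_mod_cast h3
  nlinarith [norm_nonneg (mApply M v), norm_nonneg v]

lemma norm_mApply_proj {P : Matrix (Fin n) (Fin n) ℂ}
    (h1 : P.conjTranspose = P) (h2 : P * P = P) (v : QState n) :
    ‖mApply P v‖ ≤ ‖v‖ := by
  have key : (inner ℂ (mApply P v) (mApply P v) : ℂ) = inner ℂ v (mApply P v) := by
    have hadj : Matrix.toEuclideanLin P.conjTranspose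
        = LinearMap.adjoint (Matrix.toEuclideanLin P) :=
      Matrix.toEuclideanLin_conjTranspose_eq_adjoint P
    have h3 : (inner ℂ v (mApply P.conjTranspose (mApply P v)) : ℂ)
        = inner ℂ (mApply P v) (mApply P v) := by
      show (inner ℂ v ((Matrix.toEuclideanLin P.conjTranspose) (mApply P v)) : ℂ) = _
      rw [hadj]
      exact LinearMap.adjoint_inner_right (Matrix.toEuclideanLin P) _ _
    rw [← h3, ← mApply_mul]
    rw [h1, h2]
  have h4 : ‖mApply P v‖ ^ 2 ≤ ‖v‖ * ‖mApply P v‖ := by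
    have h5 : (‖mApply P v‖ : ℂ) ^ 2 = inner ℂ v (mApply P v) := by
      rw [← key, inner_self_eq_norm_sq_to_K]
      norm_cast
    have h6 : ‖(inner ℂ v (mApply P v) : ℂ)‖ ≤ ‖v‖ * ‖mApply P v‖ := norm_inner_le_norm v _
    calc ‖mApply P v‖ ^ 2 = ‖(‖mApply P v‖ : ℂ) ^ 2‖ := by
            rw [norm_pow]; simp
      _ = ‖(inner ℂ v (mApply P v) : ℂ)‖ := by rw [h5]
      _ ≤ ‖v‖ * ‖mApply P v‖ := h6
  rcases eq_or_lt_of_le (norm_nonneg (mApply P v)) with h | h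
  · rw [← h]; exact norm_nonneg v
  · nlinarith



open MultiQFA in
lemma window_append {k : ℕ} (s t : List Bool) (ht : k ≤ t.length) :
    window k (s ++ t) = window k t := by
  unfold window
  simp only [List.map_append, List.length_append, List.length_map, List.length_replicate]
  rw [← List.append_assoc]
  have h1 : k - 1 + (s.length + t.length) - k
      = (List.replicate (k-1) (none : Option Bool) ++ s.map some).length + (t.length - k) := by
    simp only [List.length_append, List.length_map, List.length_replicate]
    omega
  have h2 : k - 1 + t.length - k
      = (List.replicate (k-1) (none : Option Bool)).length + (t.length - k) := by
    simp only [List.length_replicate]; omega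
  rw [h1, h2, List.drop_length_add_append, List.drop_length_add_append]

open MultiQFA in
lemma qState_append {k : ℕ} (A : MultiQFA Bool k n) (s w : List Bool) :
    A.qState (s ++ w) = (List.range w.length).foldl
      (fun v i => mApply (A.U (window k ((s ++ w).take (s.length + (i + 1))))) v)
      (A.qState s) := by
  unfold MultiQFA.qState
  rw [List.length_append, List.range_add, List.foldl_append, List.foldl_map]
  congr 1
  · apply List.foldl_ext
    intro v i hi
    rw [List.mem_range] at hi
    rw [List.take_append_of_le_length (by omega)]

def zs (m : ℕ) : List Bool := List.replicate m false

open MultiQFA in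
def evolve {k : ℕ} (A : MultiQFA Bool k n) (w : List Bool) (v : QState n) : QState n :=
  (List.range w.length).foldl
    (fun v i => mApply (A.U (window k (zs (k-1) ++ w.take (i + 1)))) v) v

open MultiQFA in
lemma qState_shift {k : ℕ} (A : MultiQFA Bool k n) (s w : List Bool) (hk : 1 ≤ k)
    (hs : zs (k-1) <:+ s) :
    A.qState (s ++ w) = evolve A w (A.qState s) := by
  rw [qState_append]
  unfold evolve
  apply List.foldl_ext
  intro v i hi
  rw [List.mem_range] at hi
  obtain ⟨s0, rfl⟩ := hs
  have h1 : (s0 ++ zs (k-1) ++ w).take ((s0 ++ zs (k-1)).length + (i+1))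
      = s0 ++ (zs (k-1) ++ w.take (i+1)) := by
    rw [List.take_length_add_append, List.append_assoc]
  rw [h1, window_append]
  simp only [List.length_append, List.length_take, List.length_replicate, zs]
  omega

lemma foldl_mApply_iso {k : ℕ} (A : MultiQFA Bool k n) (g : ℕ → List (Option Bool))
    (l : List ℕ) : ∀ v v' : QState n,
    ‖(l.foldl (fun v i => mApply (A.U (g i)) v) v)
      - (l.foldl (fun v i => mApply (A.U (g i)) v) v')‖ = ‖v - v'‖ := by
  induction l with
  | nil => intro v v'; rfl
  | cons x xs ih =>
    intro v v'
    simp only [List.foldl_cons]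
    rw [ih]
    rw [← mApply_sub]
    exact norm_mApply_unitary (A.U_unitary (g x)) _

lemma evolve_iso {k : ℕ} (A : MultiQFA Bool k n) (w : List Bool) (v v' : QState n) :
    ‖evolve A w v - evolve A w v'‖ = ‖v - v'‖ :=
  foldl_mApply_iso A _ _ v v'

lemma iterate_iso (f : QState n → QState n)
    (hf : ∀ v v', ‖f v - f v'‖ = ‖v - v'‖) (m : ℕ) (v v' : QState n) :
    ‖f^[m] v - f^[m] v'‖ = ‖v - v'‖ := by
  induction m generalizing v v' with
  | zero => rfl
  | succ m ih =>
    simp only [Function.iterate_succ_apply]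
    rw [ih, hf]

lemma norm_qState {k : ℕ} (A : MultiQFA Bool k n) (x : List Bool) :
    ‖A.qState x‖ = 1 := by
  unfold MultiQFA.qState
  have key : ∀ (l : List ℕ) (v : QState n),
      ‖l.foldl (fun v i => mApply (A.U (MultiQFA.window k (x.take (i + 1)))) v) v‖ = ‖v‖ := by
    intro l
    induction l with
    | nil => intro v; rfl
    | cons a as ih =>
      intro v
      simp only [List.foldl_cons]
      rw [ih]
      exact norm_mApply_unitary (A.U_unitary _) _
  rw [key, A.ψ0_unit]

lemma exists_iterate_close (f : QState n → QState n)
    (hf : ∀ v v', ‖f v - f v'‖ = ‖v - v'‖) (hf0 : f 0 = 0) (v0 : QState n)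
    {ε : ℝ} (hε : 0 < ε) :
    ∃ d : ℕ, 1 ≤ d ∧ ‖f^[d] v0 - v0‖ < ε := by
  have hmem : ∀ m : ℕ, f^[m] v0 ∈ Metric.closedBall (0 : QState n) ‖v0‖ := by
    intro m
    have h1 : f^[m] 0 = 0 := Function.iterate_fixed hf0 m
    have h2 : ‖f^[m] v0 - f^[m] 0‖ = ‖v0 - 0‖ := iterate_iso f hf m v0 0
    rw [h1, sub_zero, sub_zero] at h2
    simpa [Metric.mem_closedBall, dist_eq_norm] using le_of_eq h2
  obtain ⟨x, -, φ, hφ, hconv⟩ :=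
    (isCompact_closedBall (0 : QState n) ‖v0‖).tendsto_subseq hmem
  have hc := hconv.cauchySeq
  rw [Metric.cauchySeq_iff] at hc
  obtain ⟨N, hN⟩ := hc ε hε
  have hd : dist (f^[φ (N+1)] v0) (f^[φ N] v0) < ε := hN (N+1) (by omega) N (by omega)
  have hij : φ N < φ (N+1) := hφ (Nat.lt_succ_self N)
  refine ⟨φ (N+1) - φ N, by omega, ?_⟩
  have hsplit : φ (N+1) = (φ (N+1) - φ N) + φ N := by omega
  rw [dist_eq_norm, hsplit, Function.iterate_add_apply] at hd
  calc ‖f^[φ (N+1) - φ N] v0 - v0‖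
      = ‖f^[φ N] (f^[φ (N+1) - φ N] v0) - f^[φ N] v0‖ :=
        (iterate_iso f hf (φ N) _ _).symm
    _ < ε := by
        have : f^[φ (N+1) - φ N] (f^[φ N] v0) = f^[φ N] (f^[φ (N+1) - φ N] v0) := by
          rw [← Function.iterate_add_apply, ← Function.iterate_add_apply, Nat.add_comm]
        rw [this] at hd; exact hd

lemma evolve_zero {k : ℕ} (A : MultiQFA Bool k n) (w : List Bool) :
    evolve A w (0 : QState n) = 0 := by
  unfold evolve
  generalize (List.range w.length) = l
  induction l with
  | nil => rfl
  | cons a as ih =>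
    simp only [List.foldl_cons]
    have h0 : mApply (A.U (MultiQFA.window k (zs (k-1) ++ w.take (a + 1)))) (0 : QState n) = 0 :=
      map_zero (Matrix.toEuclideanLin _)
    rw [h0, ih]

lemma replicate_false_true_eq : ∀ {b a : ℕ} {r1 r2 : List Bool},
    List.replicate b false ++ true :: r1 = List.replicate a false ++ true :: r2 →
    b = a ∧ r1 = r2 := by
  intro b
  induction b with
  | zero =>
    intro a r1 r2 hEq
    cases a with
    | zero => exact ⟨rfl, by simpa using hEq⟩
    | succ a => simp [List.replicate_succ] at hEq
  | succ b ih =>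
    intro a r1 r2 hEq
    cases a with
    | zero => simp [List.replicate_succ] at hEq
    | succ a =>
      simp only [List.replicate_succ, List.cons_append, List.cons.injEq] at hEq
      obtain ⟨-, hEq⟩ := hEq
      obtain ⟨h1, h2⟩ := ih hEq
      exact ⟨by omega, h2⟩

lemma not_star (h a : ℕ) (hh : 1 ≤ h) (ha : 1 ≤ a) (t : List Bool) :
    List.replicate a false ++ true :: true :: t ∉ kleeneStar (blockLang h) := by
  rintro ⟨l, hbl, hfl⟩
  cases l with
  | nil => simp at hfl
  | cons w l' =>
    obtain ⟨a1, b1, hb1, rfl⟩ := hbl w List.mem_cons_self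
    rw [List.flatten_cons] at hfl
    cases a1 with
    | succ a1 =>
      cases a with
      | zero => omega
      | succ a2 => simp [List.replicate_succ] at hfl
    | zero =>
      simp only [List.replicate_zero, List.nil_append, List.append_assoc,
        List.cons_append, List.singleton_append] at hfl
      obtain ⟨hba, hrest⟩ := replicate_false_true_eq hfl
      cases h with
      | zero => omega
      | succ h2 => simp [List.replicate_succ] at hrest

open MultiQFA in
lemma probAcc_diff_le {k : ℕ} (A : MultiQFA Bool k n) (x1 x2 : List Bool) :
    A.probAcc x1 - A.probAcc x2 ≤ 2 * ‖A.qState x1 - A.qState x2‖ := by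
  have ha0 : 0 ≤ ‖mApply A.P (A.qState x1)‖ := norm_nonneg _
  have hb0 : 0 ≤ ‖mApply A.P (A.qState x2)‖ := norm_nonneg _
  have ha1 : ‖mApply A.P (A.qState x1)‖ ≤ 1 := by
    have := norm_mApply_proj A.P_proj.1 A.P_proj.2 (A.qState x1)
    rwa [norm_qState] at this
  have hb1 : ‖mApply A.P (A.qState x2)‖ ≤ 1 := by
    have := norm_mApply_proj A.P_proj.1 A.P_proj.2 (A.qState x2)
    rwa [norm_qState] at this
  have hab : ‖mApply A.P (A.qState x1)‖ - ‖mApply A.P (A.qState x2)‖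
      ≤ ‖A.qState x1 - A.qState x2‖ := by
    calc ‖mApply A.P (A.qState x1)‖ - ‖mApply A.P (A.qState x2)‖
        ≤ ‖mApply A.P (A.qState x1) - mApply A.P (A.qState x2)‖ := norm_sub_norm_le _ _
      _ = ‖mApply A.P (A.qState x1 - A.qState x2)‖ := by rw [mApply_sub]
      _ ≤ ‖A.qState x1 - A.qState x2‖ := norm_mApply_proj A.P_proj.1 A.P_proj.2 _
  have hD0 : 0 ≤ ‖A.qState x1 - A.qState x2‖ := norm_nonneg _
  unfold MultiQFA.probAcc
  nlinarith [hab, ha0, hb0, ha1, hb1, hD0]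

end Stmt14Aux



/-- For every `h ≥ 1`, prime `p`, and `k ≥ 1`, no `k`-letter 1QFA over
`{0,1}` recognizes `L(h,p)` with an isolated cut-point. -/
theorem stmt_14 (h p : ℕ) (hh : 1 ≤ h) (hp : p.Prime) (k : ℕ) (hk : 1 ≤ k) (n : ℕ)
    (A : MultiQFA Bool k n) (lam ε : ℝ) (hlam : 0 < lam ∧ lam < 1) (hε : 0 < ε) :
    ¬ A.Recognizes (Lhp h p) lam ε := by
  intro hrec
  have hp1 : 0 < p := hp.pos
  have hmul : k + h + 2 ≤ p * (k + h + 2) := Nat.le_mul_of_pos_left _ hp.pos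
  set c := k - 1 with hc
  set a := p * (k + h + 2) - (h + 1) with hadef
  have ha1 : 1 ≤ a := by omega
  have hac : c ≤ a := by omega
  set y : List Bool := true :: true :: zs c with hy
  set z : List Bool := true :: zs h with hz
  set pre : ℕ → List Bool := fun m => zs a ++ (List.replicate m y).flatten with hpre
  have hsufa : zs c <:+ zs a := by
    refine ⟨zs (a - c), ?_⟩
    show List.replicate (a-c) false ++ List.replicate c false = List.replicate a false
    rw [← List.replicate_add]
    congr 1
    omega
  have hsufy : zs c <:+ y := ⟨[true, true], rfl⟩
  have hpre_succ : ∀ m, pre (m+1) = pre m ++ y := by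
    intro m
    simp [hpre, List.replicate_succ', List.append_assoc]
  have hsufpre : ∀ m, zs c <:+ pre m := by
    intro m
    cases m with
    | zero =>
      have h0 : pre 0 = zs a := by simp [hpre]
      rw [h0]; exact hsufa
    | succ m =>
      rw [hpre_succ]
      exact hsufy.trans (List.suffix_append _ y)
  set f : QState n → QState n := evolve A y with hf
  set v0 : QState n := A.qState (zs a) with hv0
  have hstate : ∀ m, A.qState (pre m) = f^[m] v0 := by
    intro m
    induction m with
    | zero =>
      have h0 : pre 0 = zs a := by simp [hpre]
      rw [h0]; rfl
    | succ m ih =>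
      rw [hpre_succ, qState_shift A (pre m) y hk (hsufpre m), ih]
      exact (Function.iterate_succ_apply' f m v0).symm
  have hX : ∀ m, A.qState (pre m ++ z) = evolve A z (f^[m] v0) := by
    intro m
    rw [qState_shift A (pre m) z hk (hsufpre m), hstate]
  obtain ⟨d, hd1, hdist⟩ := exists_iterate_close f (evolve_iso A y) (evolve_zero A y) v0 hε
  have hclose : ‖A.qState (pre 0 ++ z) - A.qState (pre d ++ z)‖ < ε := by
    rw [hX, hX, evolve_iso, Function.iterate_zero_apply, ← norm_neg]
    simpa [neg_sub] using hdist
  have hblock0 : zs a ++ z ∈ blockLang h := by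
    refine ⟨0, a, ha1, ?_⟩
    simp [zs, hz]
  have hmem0 : (pre 0 ++ z) ∈ Lhp h p := by
    have hpre0 : pre 0 ++ z = zs a ++ z := by simp [hpre]
    constructor
    · refine ⟨[zs a ++ z], ?_, by simp [hpre0]⟩
      intro w hw
      rw [List.mem_singleton] at hw
      subst hw
      exact hblock0
    · have hlen : (pre 0 ++ z).length = p * (k + h + 2) := by
        rw [hpre0]
        simp only [List.length_append, hz, List.length_cons, zs, List.length_replicate]
        omega
      show (pre 0 ++ z).length % p = 0
      rw [hlen]
      exact Nat.mul_mod_right _ _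
  obtain ⟨e, rfl⟩ : ∃ e, d = e + 1 := ⟨d - 1, by omega⟩
  have hnonmem : (pre (e+1) ++ z) ∉ Lhp h p := by
    intro hmem
    have hshape : pre (e+1) ++ z
        = List.replicate a false ++ true :: true :: (zs c ++ ((List.replicate e y).flatten ++ z)) := by
      simp [hpre, hy, List.replicate_succ, List.append_assoc, zs]
    exact not_star h a hh ha1 _ (by rw [← hshape]; exact hmem.1)
  have hge := hrec.1 _ hmem0
  have hle := hrec.2 _ hnonmem
  have hdiff := probAcc_diff_le A (pre 0 ++ z) (pre (e+1) ++ z)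
  linarith


end
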